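/- arXiv:1512.06259 — 2 statements merged into one kernel-verified Lean document; each statement's English description precedes it below -/
import Mathlib

section
/- Let (⊠,T) ∈ LR(α,□,β,γ) and let T_j denote the punctured tableau obtained after the j-th move of the local evacuation-shuffle algorithm applied to (⊠,T). Then at every stage, omitting the square ⊠, the rows of T_j are weakly increasing, the columns of T_j are strictly increasing, and the reading word of T_j is ballot. -/
/-
Common combinatorial framework for the paper
"Monodromy and K-theory of Schubert curves via generalized jeu de taquin"
(Gillespie–Levinson).

Cells are pairs (row, column), 0-indexed, with row 0 the top row (English
convention).  A skew tableau is modelled as a `Filling`, i.e. a function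
`Cell → Option ℕ`; `none` means the cell is not in the (filled part of the)
shape.  A punctured tableau is a filling together with a distinguished empty
cell `box` (the ⊠).
-/

namespace SC

/-- A cell `(row, column)` of the plane; row `0` is the top row. -/
abbrev Cell : Type := ℕ × ℕ

/-- A partial filling of the cells by natural-number entries. -/
abbrev Filling : Type := Cell → Option ℕ

/-- `readBefore p q` : the cell `p` comes strictly before `q` in reading order
(rows bottom to top, left to right within each row). -/
def readBefore (p q : Cell) : Prop :=
  q.1 < p.1 ∨ (p.1 = q.1 ∧ p.2 < q.2)

/-- Two cells share an edge. -/
def Adj (p q : Cell) : Prop :=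
  (p.1 = q.1 ∧ (p.2 + 1 = q.2 ∨ q.2 + 1 = p.2)) ∨
    (p.2 = q.2 ∧ (p.1 + 1 = q.1 ∨ q.1 + 1 = p.1))

/-- A partition contained in the `k × m` rectangle (parts indexed from `0`). -/
structure Partition (k m : ℕ) where
  part : ℕ → ℕ
  antitone' : ∀ ⦃i j : ℕ⦄, i ≤ j → part j ≤ part i
  le_width : ∀ i, part i ≤ m
  eq_zero : ∀ i, k ≤ i → part i = 0

/-- The size `|λ|` of a partition. -/
def Partition.size {k m : ℕ} (l : Partition k m) : ℕ :=
  ∑ i ∈ Finset.range k, l.part i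

/-- The number `ℓ(λ)` of nonzero parts. -/
def Partition.length {k m : ℕ} (l : Partition k m) : ℕ :=
  ((Finset.range k).filter fun i => l.part i ≠ 0).card

/-- The skew shape `γᶜ/α` inside the `k × m` rectangle: row `i` of `γᶜ` has
length `m - γ (k-1-i)`. -/
def totalShape (k m : ℕ) (a g : Partition k m) : Set Cell :=
  {p | p.1 < k ∧ a.part p.1 ≤ p.2 ∧ p.2 < m - g.part (k - 1 - p.1)}

/-- The set of filled cells of a filling. -/
def shapeOf (T : Filling) : Set Cell := {p | T p ≠ none}

/-- Rows are weakly increasing (on filled cells). -/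
def RowsWeak (T : Filling) : Prop :=
  ∀ r c₁ c₂ v₁ v₂, c₁ ≤ c₂ → T (r, c₁) = some v₁ → T (r, c₂) = some v₂ → v₁ ≤ v₂

/-- Columns are strictly increasing (on filled cells). -/
def ColsStrict (T : Filling) : Prop :=
  ∀ r₁ r₂ c v₁ v₂, r₁ < r₂ → T (r₁, c) = some v₁ → T (r₂, c) = some v₂ → v₁ < v₂

/-- All entries are at least `1`. -/
def PosEntries (T : Filling) : Prop := ∀ p v, T p = some v → 1 ≤ v

open scoped Classical in
/-- The number of cells of the `k × m` rectangle satisfying `P` and carrying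
the entry `v`. -/
noncomputable def countP (k m : ℕ) (T : Filling) (P : Cell → Prop) (v : ℕ) : ℕ :=
  ((Finset.range k ×ˢ Finset.range m).filter fun p => P p ∧ T p = some v).card

/-- The reading word is ballot: every weak suffix contains, for each `i ≥ 1`,
at least as many `i`'s as `(i+1)`'s. -/
def Ballot (k m : ℕ) (T : Filling) : Prop :=
  ∀ (p : Cell) (i : ℕ), 1 ≤ i →
    countP k m T (fun q => q = p ∨ readBefore p q) (i + 1) ≤
      countP k m T (fun q => q = p ∨ readBefore p q) i

/-- The filling has content `β`: the entry `j+1` occurs exactly `β j` times. -/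
def HasContent (k m : ℕ) (b : Partition k m) (T : Filling) : Prop :=
  ∀ j : ℕ, countP k m T (fun _ => True) (j + 1) = b.part j

/-- A punctured tableau: a filling together with a distinguished empty cell
(the `⊠`). -/
structure PState where
  box : Cell
  T : Filling

/-- Membership in `LR(α, □, β, γ)`: `T` is a Littlewood–Richardson skew tableau
of content `β`, `⊠` is an inner co-corner of `T`, and `⊠ ⊔ T` has shape `γᶜ/α`.
(The conditions on `(box.1, box.2 - 1)` and `(box.1 - 1, box.2)` say that the
west and north neighbours of the box are not in the shape; note that if
`box.2 = 0` resp. `box.1 = 0` the displayed cell is the box itself, which is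
empty, so the condition is automatic, as it should be.) -/
def MemLR1 (k m : ℕ) (a b g : Partition k m) (x : PState) : Prop :=
  x.box ∈ totalShape k m a g ∧
  (∀ p : Cell, (x.T p).isSome ↔ (p ∈ totalShape k m a g ∧ p ≠ x.box)) ∧
  RowsWeak x.T ∧ ColsStrict x.T ∧ PosEntries x.T ∧
  Ballot k m x.T ∧ HasContent k m b x.T ∧
  (x.box.1, x.box.2 - 1) ∉ shapeOf x.T ∧ (x.box.1 - 1, x.box.2) ∉ shapeOf x.T

/-- Membership in `LR(α, β, □, γ)`: as in `MemLR1` but the box `⊠` extends `T`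
outward (its east and south neighbours are not in the shape). -/
def MemLR2 (k m : ℕ) (a b g : Partition k m) (x : PState) : Prop :=
  x.box ∈ totalShape k m a g ∧
  (∀ p : Cell, (x.T p).isSome ↔ (p ∈ totalShape k m a g ∧ p ≠ x.box)) ∧
  RowsWeak x.T ∧ ColsStrict x.T ∧ PosEntries x.T ∧
  Ballot k m x.T ∧ HasContent k m b x.T ∧
  (x.box.1, x.box.2 + 1) ∉ shapeOf x.T ∧ (x.box.1 + 1, x.box.2) ∉ shapeOf x.T

/-- Exchange the box with the cell `q`, which receives the box while the old
box cell receives the entry `v`. -/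
def swapState (x : PState) (q : Cell) (v : ℕ) : PState :=
  ⟨q, Function.update (Function.update x.T q none) x.box (some v)⟩

/-! ### The local evacuation-shuffle -/

/-- Phase 1 applies at value `i` iff the box does not precede all of the `i`'s
in reading order. -/
def phase1Cond (i : ℕ) (x : PState) : Prop :=
  ∃ q, x.T q = some i ∧ readBefore q x.box

/-- `q` is the nearest `i` strictly prior to the box in reading order. -/
def Phase1Move (i : ℕ) (x : PState) (q : Cell) : Prop :=
  x.T q = some i ∧ readBefore q x.box ∧
    ∀ q', x.T q' = some i → readBefore q' x.box → q' = q ∨ readBefore q' q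

/-- Phase 2 continues at value `i` iff the suffix of the reading word strictly
after the box contains strictly more `i`'s than `(i+1)`'s. -/
def phase2Cond (k m i : ℕ) (x : PState) : Prop :=
  countP k m x.T (fun q => readBefore x.box q) (i + 1) <
    countP k m x.T (fun q => readBefore x.box q) i

/-- `q` is the nearest `i` strictly after the box in reading order. -/
def Phase2Move (i : ℕ) (x : PState) (q : Cell) : Prop :=
  x.T q = some i ∧ readBefore x.box q ∧
    ∀ q', x.T q' = some i → readBefore x.box q' → q' = q ∨ readBefore q q'

/-- One step of the local evacuation-shuffle algorithm, on states
`(i, phase, x)` where `phase = false` is Phase 1 and `phase = true` is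
Phase 2, and `lb = ℓ(β)`.  The algorithm starts at `(1, false, x)` and is
stuck exactly at the states with `i = lb + 1`. -/
inductive Step (k m lb : ℕ) : ℕ × Bool × PState → ℕ × Bool × PState → Prop
  | p1 {i : ℕ} {x : PState} {q : Cell} (hi : i ≤ lb) (h : Phase1Move i x q) :
      Step k m lb (i, false, x) (i + 1, false, swapState x q i)
  | p1to2 {i : ℕ} {x : PState} (hi : i ≤ lb) (h : ¬ phase1Cond i x) :
      Step k m lb (i, false, x) (i, true, x)
  | p2 {i : ℕ} {x : PState} {q : Cell} (hi : i ≤ lb) (hc : phase2Cond k m i x)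
      (h : Phase2Move i x q) :
      Step k m lb (i, true, x) (i, true, swapState x q i)
  | p2inc {i : ℕ} {x : PState} (hi : i ≤ lb) (hc : ¬ phase2Cond k m i x) :
      Step k m lb (i, true, x) (i + 1, true, x)

/-- The complete run of the local evacuation-shuffle:
`local-esh (x) = y`. -/
def LocalEshRun (k m lb : ℕ) (x y : PState) : Prop :=
  ∃ bl : Bool, Relation.ReflTransGen (Step k m lb) (1, false, x) (lb + 1, bl, y)

/-! ### Jeu de taquin slides -/

/-- One step of an inward jeu de taquin slide: the empty box moves north or
west, the displaced entry moves south-east into the old box.  Ties between the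
north and west entries are broken by moving the north entry. -/
inductive InStep : PState → PState → Prop
  | north {x : PState} {r c v : ℕ} (hb : x.box = (r + 1, c)) (hv : x.T (r, c) = some v)
      (hw : ∀ w, x.T (r + 1, c - 1) = some w → w ≤ v) :
      InStep x (swapState x (r, c) v)
  | west {x : PState} {r c v : ℕ} (hb : x.box = (r, c + 1)) (hv : x.T (r, c) = some v)
      (hn : ∀ w, x.T (r - 1, c + 1) = some w → w < v) :
      InStep x (swapState x (r, c) v)

/-- One step of an outward jeu de taquin slide: the empty box moves south or
east, the displaced entry moves north-west into the old box.  Ties between the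
south and east entries are broken by moving the south entry. -/
inductive OutStep : PState → PState → Prop
  | south {x : PState} {r c v : ℕ} (hb : x.box = (r, c)) (hv : x.T (r + 1, c) = some v)
      (he : ∀ w, x.T (r, c + 1) = some w → v ≤ w) :
      OutStep x (swapState x (r + 1, c) v)
  | east {x : PState} {r c v : ℕ} (hb : x.box = (r, c)) (hv : x.T (r, c + 1) = some v)
      (hs : ∀ w, x.T (r + 1, c) = some w → v < w) :
      OutStep x (swapState x (r, c + 1) v)

/-- Run a step relation to completion. -/
def RunToEnd (R : PState → PState → Prop) (x y : PState) : Prop :=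
  Relation.ReflTransGen R x y ∧ ∀ z, ¬ R y z

/-- The shuffle `sh : LR(α,β,□,γ) → LR(α,□,β,γ)`: the complete inward jeu de
taquin slide of `T` into the box. -/
def ShRun (x y : PState) : Prop := RunToEnd InStep x y

/-! ### Rectification, promotion, and the evacuation-shuffle -/

/-- `S` is (the set of cells of) a skew shape `λ/μ`. -/
def IsSkewShape (S : Set Cell) : Prop :=
  ∃ lam mu : ℕ → ℕ,
    (∀ ⦃i j : ℕ⦄, i ≤ j → lam j ≤ lam i) ∧ (∀ ⦃i j : ℕ⦄, i ≤ j → mu j ≤ mu i) ∧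
    (∀ i, mu i ≤ lam i) ∧ ∀ p : Cell, p ∈ S ↔ mu p.1 ≤ p.2 ∧ p.2 < lam p.1

/-- `c` is an inner co-corner of the shape `S` (an addable corner of the inner
partition). -/
def InnerAddable (S : Set Cell) (c : Cell) : Prop :=
  c ∉ S ∧ IsSkewShape (insert c S) ∧ (c.1, c.2 - 1) ∉ S ∧ (c.1 - 1, c.2) ∉ S

/-- One rectification move on a filling `U`: slide the hole inward from an
inner co-corner `c` through `U` until it exits; `d` records the vacated outer
cell and `V` is the resulting filling. -/
def RectMove (U V : Filling) (d : Cell) : Prop :=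
  ∃ c : Cell, InnerAddable (shapeOf U) c ∧ RunToEnd OutStep ⟨c, U⟩ ⟨d, V⟩

/-- A sequence of rectification moves, recording the vacated cells. -/
inductive RectSeq : Filling → List Cell → Filling → Prop
  | nil (U : Filling) : RectSeq U [] U
  | cons {U V W : Filling} {d : Cell} {ds : List Cell} :
      RectMove U V d → RectSeq V ds W → RectSeq U (d :: ds) W

/-- One un-rectification move: slide the hole outward-to-inward starting at the
recorded cell `d` (this is the inverse of the rectification move that vacated
`d`). -/
def UnRectMove (V W : Filling) (d : Cell) : Prop :=
  d ∉ shapeOf V ∧ ∃ c : Cell, RunToEnd InStep ⟨d, V⟩ ⟨c, W⟩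

/-- A sequence of un-rectification moves along a list of recorded cells. -/
inductive UnRectSeq : Filling → List Cell → Filling → Prop
  | nil (U : Filling) : UnRectSeq U [] U
  | cons {U V W : Filling} {d : Cell} {ds : List Cell} :
      UnRectMove U V d → UnRectSeq V ds W → UnRectSeq U (d :: ds) W

/-- `S` is a straight (non-skew) shape. -/
def IsStraight (S : Set Cell) : Prop :=
  ∀ p ∈ S, ∀ q : Cell, q.1 ≤ p.1 → q.2 ≤ p.2 → q ∈ S

/-- Jeu de taquin promotion step on a rectified tableau containing the entry
`0`: delete the `0`, rectify the remainder (one outward slide of the hole),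
and label the vacated outer corner with `lb + 1`. -/
def PromMove (lb : ℕ) (R R' : Filling) : Prop :=
  ∃ (p d : Cell) (V : Filling), R p = some 0 ∧
    RunToEnd OutStep ⟨p, Function.update R p none⟩ ⟨d, V⟩ ∧
    R' = Function.update V d (some (lb + 1))

/-- The evacuation-shuffle `esh : LR(α,□,β,γ) → LR(α,β,□,γ)`: treat `⊠` as the
entry `0`, rectify recording the order, promote (delete the `0`, rectify the
remainder, label the vacated corner `ℓ(β)+1`), un-rectify along the recorded
order reversed, and turn the entry `ℓ(β)+1` back into `⊠`. -/
def EshRel (lb : ℕ) (x y : PState) : Prop :=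
  ∃ (ds : List Cell) (R R' W : Filling),
    RectSeq (Function.update x.T x.box (some 0)) ds R ∧
    IsStraight (shapeOf R) ∧
    PromMove lb R R' ∧
    UnRectSeq R' ds.reverse W ∧
    W y.box = some (lb + 1) ∧ y.T = Function.update W y.box none

/-- The monodromy operator `ω = sh ∘ local-esh` (as a relation). -/
def OmegaRel (k m lb : ℕ) (x y : PState) : Prop :=
  ∃ z : PState, LocalEshRun k m lb x z ∧ ShRun z y

/-! ### Genomic tableaux -/

/-- `(U, {b₁, b₂})` is a ballot genomic tableau of shape `γᶜ/α` and K-theoretic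
content `β`, with repeated (extra) entry `i`; here `b₁` comes before `b₂` in
reading order. -/
def IsGenomic (k m : ℕ) (a b g : Partition k m) (i : ℕ)
    (U : Filling) (b₁ b₂ : Cell) : Prop :=
  1 ≤ i ∧
  (∀ p : Cell, (U p).isSome ↔ p ∈ totalShape k m a g) ∧
  RowsWeak U ∧ ColsStrict U ∧ PosEntries U ∧
  (∀ j : ℕ, countP k m U (fun _ => True) (j + 1)
      = b.part j + if j + 1 = i then 1 else 0) ∧
  readBefore b₁ b₂ ∧ ¬ Adj b₁ b₂ ∧ U b₁ = some i ∧ U b₂ = some i ∧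
  (∀ q : Cell, U q = some i → readBefore b₁ q → readBefore q b₂ → False) ∧
  Ballot k m (Function.update U b₁ none) ∧
  Ballot k m (Function.update U b₂ none)

/-- `K(γᶜ/α; β)(i)`: ballot genomic tableaux with repeated entry `i`. -/
def KSet (k m : ℕ) (a b g : Partition k m) (i : ℕ) : Set (Filling × Cell × Cell) :=
  {u | IsGenomic k m a b g i u.1 u.2.1 u.2.2}

/-- `K(γᶜ/α; β)`: all ballot genomic tableaux of shape `γᶜ/α` and K-theoretic
content `β`. -/
def KAll (k m : ℕ) (a b g : Partition k m) : Set (Filling × Cell × Cell) :=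
  ⋃ i : ℕ, KSet k m a b g i

/-! ### Permutation utilities -/

/-- The reflection length of a permutation: the least number of transpositions
whose product is `g`. -/
noncomputable def rlength {X : Type*} (g : Equiv.Perm X) : ℕ :=
  letI := Classical.decEq X
  sInf {n : ℕ | ∃ l : List (Equiv.Perm X), l.length = n ∧
    (∀ τ ∈ l, ∃ x y : X, x ≠ y ∧ τ = Equiv.swap x y) ∧ l.prod = g}

/-- The set of orbits of a permutation. -/
def orbitsOf {X : Type*} (g : Equiv.Perm X) : Set (Set X) :=
  {s | ∃ a : X, s = {b | g.SameCycle a b}}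

/-- The number of orbits of a permutation. -/
noncomputable def orbitCount {X : Type*} (g : Equiv.Perm X) : ℕ :=
  (orbitsOf g).ncard

/-! ### The sets `Xᵢ` and the factors `ℓᵢ`, `sᵢ` -/

/-- The box sits between the `(i-1)`-st and `i`-th horizontal strips:
giving the box any value strictly between `i - 1` and `i` would keep rows
weakly increasing and columns strictly increasing. -/
def BoxBetween (i : ℕ) (x : PState) : Prop :=
  (∀ c v, c < x.box.2 → x.T (x.box.1, c) = some v → v ≤ i - 1) ∧
  (∀ c v, x.box.2 < c → x.T (x.box.1, c) = some v → i ≤ v) ∧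
  (∀ r v, r < x.box.1 → x.T (r, x.box.2) = some v → v ≤ i - 1) ∧
  (∀ r v, x.box.1 < r → x.T (r, x.box.2) = some v → i ≤ v)

/-- The set `Xᵢ` of punctured tableaux of content `β` and total shape `γᶜ/α`
with ballot reading word, semistandard rows and columns (omitting `⊠`), in
which `⊠` lies between the `(i-1)`-st and `i`-th horizontal strips. -/
def XSet (k m : ℕ) (a b g : Partition k m) (i : ℕ) : Set PState :=
  {x | x.box ∈ totalShape k m a g ∧
    (∀ p : Cell, (x.T p).isSome ↔ (p ∈ totalShape k m a g ∧ p ≠ x.box)) ∧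
    RowsWeak x.T ∧ ColsStrict x.T ∧ PosEntries x.T ∧
    Ballot k m x.T ∧ HasContent k m b x.T ∧ BoxBetween i x}

/-- One Phase 2 move at value `i` (as a standalone step relation). -/
def P2Step (k m i : ℕ) (x y : PState) : Prop :=
  phase2Cond k m i x ∧ ∃ q, Phase2Move i x q ∧ y = swapState x q i

/-- The operator `ℓᵢ : Xᵢ → Xᵢ₊₁`: the composition of the steps of
`local-esh` exchanging `⊠` with entries equal to `i` (a single Phase 1 move
if some `i` precedes the box, otherwise the Phase 2 loop at value `i`). -/
def LiRel (k m i : ℕ) (x y : PState) : Prop :=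
  (∃ q, Phase1Move i x q ∧ y = swapState x q i) ∨
  (¬ phase1Cond i x ∧ Relation.ReflTransGen (P2Step k m i) x y ∧ ¬ phase2Cond k m i y)

/-- One step of the inward jeu de taquin shuffle in which the box passes an
entry equal to `i`. -/
def SiStep (i : ℕ) (x y : PState) : Prop := InStep x y ∧ x.T y.box = some i

/-- The operator `sᵢ : Xᵢ₊₁ → Xᵢ`: the inward jeu de taquin shuffle of `⊠`
past the entries equal to `i`. -/
def SiRun (i : ℕ) (x y : PState) : Prop :=
  Relation.ReflTransGen (SiStep i) x y ∧ ∀ z, ¬ SiStep i y z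

/-- `DownTo j` is the composite `s₁ ∘ s₂ ∘ ⋯ ∘ s_j : X_{j+1} → X₁`. -/
inductive DownTo : ℕ → PState → PState → Prop
  | zero (x : PState) : DownTo 0 x x
  | succ {j : ℕ} {x y z : PState} : SiRun (j + 1) x y → DownTo j y z → DownTo (j + 1) x z


/-! ### Auxiliary lemmas for `stmt_2` -/

section StmtTwoAux

open Classical

lemma rb_trans {p q r : Cell} (h1 : readBefore p q) (h2 : readBefore q r) :
    readBefore p r := by
  unfold readBefore at *; omega

lemma rb_irrefl (p : Cell) : ¬ readBefore p p := by
  unfold readBefore; omega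

lemma rb_total (p q : Cell) : p = q ∨ readBefore p q ∨ readBefore q p := by
  rcases p with ⟨a, b⟩; rcases q with ⟨c, d⟩
  unfold readBefore; simp only [Prod.mk.injEq]; omega

/-- The suffix strictly after `p` equals the weak suffix at the immediate
reading successor `(p.1, p.2+1)`. -/
lemma rb_succ_iff (p u : Cell) :
    readBefore p u ↔ (u = (p.1, p.2 + 1) ∨ readBefore (p.1, p.2 + 1) u) := by
  rcases p with ⟨a, b⟩; rcases u with ⟨c, d⟩
  unfold readBefore; simp only [Prod.mk.injEq]; omega

/-- The rectangle. -/
noncomputable def rectF (k m : ℕ) : Finset Cell := Finset.range k ×ˢ Finset.range m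

lemma mem_rectF {k m : ℕ} {p : Cell} : p ∈ rectF k m ↔ p.1 < k ∧ p.2 < m := by
  simp [rectF, Finset.mem_product]

lemma countP_def (k m : ℕ) (T : Filling) (P : Cell → Prop) (v : ℕ) :
    countP k m T P v = ((rectF k m).filter fun p => P p ∧ T p = some v).card := rfl

lemma countP_mono (k m : ℕ) (T : Filling) {P Q : Cell → Prop} (v : ℕ)
    (h : ∀ p, P p → T p = some v → Q p) :
    countP k m T P v ≤ countP k m T Q v := by
  classical
  rw [countP_def, countP_def]
  apply Finset.card_le_card
  intro p hp
  simp only [Finset.mem_filter] at hp ⊢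
  exact ⟨hp.1, h p hp.2.1 hp.2.2, hp.2.2⟩

lemma countP_congr (k m : ℕ) (T : Filling) {P Q : Cell → Prop} (v : ℕ)
    (h : ∀ p, T p = some v → (P p ↔ Q p)) :
    countP k m T P v = countP k m T Q v :=
  le_antisymm (countP_mono k m T v fun p hp ht => (h p ht).1 hp)
    (countP_mono k m T v fun p hp ht => (h p ht).2 hp)

lemma countP_eq_zero (k m : ℕ) (T : Filling) {P : Cell → Prop} (v : ℕ)
    (h : ∀ p, P p → T p ≠ some v) :
    countP k m T P v = 0 := by
  classical
  rw [countP_def, Finset.card_eq_zero, Finset.filter_eq_empty_iff]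
  intro p _ hp
  exact h p hp.1 hp.2

lemma countP_split (k m : ℕ) (T : Filling) {P Q R : Cell → Prop} (v : ℕ)
    (h : ∀ p, T p = some v → (P p ↔ (Q p ∨ R p)))
    (hd : ∀ p, T p = some v → Q p → R p → False) :
    countP k m T P v = countP k m T Q v + countP k m T R v := by
  classical
  rw [countP_def, countP_def, countP_def]
  have hset : ((rectF k m).filter fun p => P p ∧ T p = some v)
      = ((rectF k m).filter fun p => Q p ∧ T p = some v)
        ∪ ((rectF k m).filter fun p => R p ∧ T p = some v) := by
    ext p
    simp only [Finset.mem_filter, Finset.mem_union]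
    constructor
    · rintro ⟨hr, hp, ht⟩
      rcases (h p ht).1 hp with hq | hq
      · exact Or.inl ⟨hr, hq, ht⟩
      · exact Or.inr ⟨hr, hq, ht⟩
    · rintro (⟨hr, hq, ht⟩ | ⟨hr, hq, ht⟩) <;>
        exact ⟨hr, (h p ht).2 (by tauto), ht⟩
  rw [hset, Finset.card_union_of_disjoint]
  rw [Finset.disjoint_left]
  intro p hp hp'
  simp only [Finset.mem_filter] at hp hp'
  exact hd p hp.2.2 hp.2.1 hp'.2.1

lemma countP_single (k m : ℕ) (T : Filling) (d : Cell) (v : ℕ)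
    (hd : T d = some v) (hr : d.1 < k ∧ d.2 < m) :
    countP k m T (fun u => u = d) v = 1 := by
  classical
  rw [countP_def, Finset.card_eq_one]
  refine ⟨d, ?_⟩
  ext p
  simp only [Finset.mem_filter, Finset.mem_singleton]
  constructor
  · rintro ⟨_, h, _⟩; exact h
  · rintro rfl; exact ⟨mem_rectF.2 hr, rfl, hd⟩

lemma countP_le_of_inj (k m : ℕ) (T : Filling) {P Q : Cell → Prop} (v w : ℕ)
    (φ : Cell → Cell)
    (hm : ∀ p, P p → T p = some v → (Q (φ p) ∧ T (φ p) = some w ∧ (φ p).1 < k ∧ (φ p).2 < m))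
    (hinj : ∀ p₁ p₂, P p₁ → P p₂ → φ p₁ = φ p₂ → p₁ = p₂) :
    countP k m T P v ≤ countP k m T Q w := by
  classical
  rw [countP_def, countP_def]
  apply Finset.card_le_card_of_injOn φ
  · intro p hp
    simp only [Finset.mem_coe, Finset.mem_filter] at hp ⊢
    obtain ⟨h1, h2, h3, h4⟩ := hm p hp.2.1 hp.2.2
    exact ⟨mem_rectF.2 ⟨h3, h4⟩, h1, h2⟩
  · intro p₁ h₁ p₂ h₂ he
    simp only [Finset.coe_filter, Set.mem_setOf_eq] at h₁ h₂
    exact hinj p₁ p₂ h₁.2.1 h₂.2.1 he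

end StmtTwoAux


section StmtTwoAux2

open Classical

/-- Value description of the doubly-updated filling. -/
lemma upd2_eq_some {T : Filling} {bx q : Cell} {i : ℕ} (hbq : bx ≠ q) (p : Cell) (w : ℕ) :
    (Function.update (Function.update T q none) bx (some i)) p = some w ↔
      ((p = bx ∧ w = i) ∨ (p ≠ bx ∧ p ≠ q ∧ T p = some w)) := by
  rcases eq_or_ne p bx with rfl | hpb
  · rw [Function.update_self]
    simp [hbq, eq_comm]
  · rcases eq_or_ne p q with rfl | hpq
    · rw [Function.update_of_ne (Ne.symm hbq), Function.update_self]
      simp [Ne.symm hbq, hpb]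
    · rw [Function.update_of_ne hpb, Function.update_of_ne hpq]
      simp [hpb, hpq]

lemma countP_swap (k m : ℕ) (T : Filling) (bx q : Cell) (i : ℕ)
    (hb : T bx = none) (hq : T q = some i)
    (hbr : bx.1 < k ∧ bx.2 < m) (hqr : q.1 < k ∧ q.2 < m)
    (P : Cell → Prop) (v : ℕ) :
    countP k m (Function.update (Function.update T q none) bx (some i)) P v
        + (if P q ∧ v = i then 1 else 0)
      = countP k m T P v + (if P bx ∧ v = i then 1 else 0) := by
  classical
  have hbq : bx ≠ q := by rintro rfl; rw [hb] at hq; exact nomatch hq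
  set U := Function.update (Function.update T q none) bx (some i) with hU
  by_cases hvi : v = i
  · subst hvi
    -- erase trick
    have key : ∀ p : Cell, p ≠ bx → p ≠ q →
        (U p = some v ↔ T p = some v) := by
      intro p h1 h2
      rw [hU]
      constructor
      · intro h; rcases (upd2_eq_some hbq p v).1 h with ⟨h', _⟩ | ⟨_, _, h'⟩
        · exact absurd h' h1
        · exact h'
      · intro h; exact (upd2_eq_some hbq p v).2 (Or.inr ⟨h1, h2, h⟩)
    have hset : ((rectF k m).filter fun p => P p ∧ U p = some v).erase bx
        = ((rectF k m).filter fun p => P p ∧ T p = some v).erase q := by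
      ext p
      simp only [Finset.mem_erase, Finset.mem_filter]
      constructor
      · rintro ⟨hpb, hrect, hp, hval⟩
        have hpq : p ≠ q := by
          rintro rfl
          rw [hU] at hval
          rw [Function.update_of_ne (Ne.symm hbq), Function.update_self] at hval
          exact nomatch hval
        exact ⟨hpq, hrect, hp, (key p hpb hpq).1 hval⟩
      · rintro ⟨hpq, hrect, hp, hval⟩
        have hpb : p ≠ bx := by
          rintro rfl; rw [hb] at hval; exact nomatch hval
        exact ⟨hpb, hrect, hp, (key p hpb hpq).2 hval⟩
    have hUb : U bx = some v := by rw [hU]; exact Function.update_self _ _ _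
    have hTq : T q = some v := hq
    have c1 : ((rectF k m).filter fun p => P p ∧ U p = some v).card
        = (((rectF k m).filter fun p => P p ∧ U p = some v).erase bx).card
          + (if P bx then 1 else 0) := by
      by_cases hPb : P bx
      · have : bx ∈ (rectF k m).filter fun p => P p ∧ U p = some v := by
          simp only [Finset.mem_filter]; exact ⟨mem_rectF.2 hbr, hPb, hUb⟩
        rw [if_pos hPb, ← Finset.card_erase_add_one this]
      · have : bx ∉ (rectF k m).filter fun p => P p ∧ U p = some v := by
          simp only [Finset.mem_filter]; tauto
        rw [if_neg hPb, Finset.erase_eq_of_notMem this]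
        omega
    have c2 : ((rectF k m).filter fun p => P p ∧ T p = some v).card
        = (((rectF k m).filter fun p => P p ∧ T p = some v).erase q).card
          + (if P q then 1 else 0) := by
      by_cases hPq : P q
      · have : q ∈ (rectF k m).filter fun p => P p ∧ T p = some v := by
          simp only [Finset.mem_filter]; exact ⟨mem_rectF.2 hqr, hPq, hTq⟩
        rw [if_pos hPq, ← Finset.card_erase_add_one this]
      · have : q ∉ (rectF k m).filter fun p => P p ∧ T p = some v := by
          simp only [Finset.mem_filter]; tauto
        rw [if_neg hPq, Finset.erase_eq_of_notMem this]
        omega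
    rw [countP_def, countP_def, c1, c2, hset]
    simp only [and_true]
    omega
  · -- counts unchanged
    have hext : ∀ p, U p = some v ↔ T p = some v := by
      intro p
      rw [hU, upd2_eq_some hbq]
      constructor
      · rintro (⟨_, rfl⟩ | ⟨_, _, h⟩)
        · exact absurd rfl hvi
        · exact h
      · intro h
        refine Or.inr ⟨?_, ?_, h⟩
        · rintro rfl; rw [hb] at h; exact nomatch h
        · rintro rfl; rw [hq] at h; exact hvi (by injection h with hh; exact hh.symm)
    have : countP k m U P v = countP k m T P v := by
      refine le_antisymm ?_ ?_ <;>
      · rw [countP_def, countP_def]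
        apply Finset.card_le_card
        intro p hp
        simp only [Finset.mem_filter] at hp ⊢
        refine ⟨hp.1, hp.2.1, ?_⟩
        first
        | exact (hext p).2 hp.2.2
        | exact (hext p).1 hp.2.2
    rw [this]
    simp [hvi]

end StmtTwoAux2

section ShapeAux

variable {k m : ℕ} {a g : Partition k m}

lemma mem_shape' {r c : ℕ} :
    (r, c) ∈ totalShape k m a g ↔ r < k ∧ a.part r ≤ c ∧ c < m - g.part (k - 1 - r) :=
  Iff.rfl

lemma shape_rect {p : Cell} (hp : p ∈ totalShape k m a g) : p.1 < k ∧ p.2 < m := by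
  obtain ⟨h1, _, h3⟩ := hp
  exact ⟨h1, by omega⟩

lemma shape_row {r c₁ c c₂ : ℕ} (h1 : (r, c₁) ∈ totalShape k m a g)
    (h2 : (r, c₂) ∈ totalShape k m a g) (hc1 : c₁ ≤ c) (hc2 : c ≤ c₂) :
    (r, c) ∈ totalShape k m a g := by
  rw [mem_shape'] at h1 h2 ⊢
  omega

lemma shape_col {r₁ r r₂ c : ℕ} (h1 : (r₁, c) ∈ totalShape k m a g)
    (h2 : (r₂, c) ∈ totalShape k m a g) (hr1 : r₁ ≤ r) (hr2 : r ≤ r₂) :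
    (r, c) ∈ totalShape k m a g := by
  rw [mem_shape'] at h1 h2 ⊢
  have ha : a.part r ≤ a.part r₁ := a.antitone' hr1
  have hg : g.part (k - 1 - r) ≤ g.part (k - 1 - r₂) := g.antitone' (by omega)
  omega

/-- If the shape contains a cell of row `r+1` in column `c'` and any cell of
row `r` weakly to the left, then it contains `(r, c')`. -/
lemma shape_upright {r c c' : ℕ} (h1 : (r + 1, c') ∈ totalShape k m a g)
    (h2 : (r, c) ∈ totalShape k m a g) (hc : c ≤ c') :
    (r, c') ∈ totalShape k m a g := by
  rw [mem_shape'] at h1 h2 ⊢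
  have hg : g.part (k - 1 - (r + 1)) ≥ g.part (k - 1 - r) := g.antitone' (by omega)
  omega

/-- If the shape contains `(r, c')` and a cell of row `r+1` weakly to the
right, then it contains `(r+1, c')`. -/
lemma shape_downleft {r c c' : ℕ} (h1 : (r, c') ∈ totalShape k m a g)
    (h2 : (r + 1, c) ∈ totalShape k m a g) (hc : c' ≤ c) :
    (r + 1, c') ∈ totalShape k m a g := by
  rw [mem_shape'] at h1 h2 ⊢
  have ha : a.part (r + 1) ≤ a.part r := a.antitone' (by omega)
  omega

variable {T : Filling} {bx : Cell}

lemma shape_of_filled (hsh : ∀ p : Cell, (T p).isSome ↔ (p ∈ totalShape k m a g ∧ p ≠ bx))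
    {p : Cell} {v : ℕ} (h : T p = some v) : p ∈ totalShape k m a g ∧ p ≠ bx :=
  (hsh p).1 (by rw [h]; rfl)

lemma filled_of_shape (hsh : ∀ p : Cell, (T p).isSome ↔ (p ∈ totalShape k m a g ∧ p ≠ bx))
    {p : Cell} (h1 : p ∈ totalShape k m a g) (h2 : p ≠ bx) : ∃ v, T p = some v := by
  have := (hsh p).2 ⟨h1, h2⟩
  exact Option.isSome_iff_exists.1 this

lemma box_none (hsh : ∀ p : Cell, (T p).isSome ↔ (p ∈ totalShape k m a g ∧ p ≠ bx)) :
    T bx = none := by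
  by_contra h
  have : (T bx).isSome := Option.ne_none_iff_isSome.1 h
  exact ((hsh bx).1 this).2 rfl

section Chains

variable (hsh : ∀ p : Cell, (T p).isSome ↔ (p ∈ totalShape k m a g ∧ p ≠ bx))
  (hb : bx ∈ totalShape k m a g) (hrw : RowsWeak T) (hcs : ColsStrict T)

include hsh hb hrw in
lemma chain_left {w : ℕ} (hWb : ∀ v, T (bx.1, bx.2 - 1) = some v → v ≤ w) :
    ∀ c' v, c' < bx.2 → T (bx.1, c') = some v → v ≤ w := by
  intro c' v hc hv
  have hcell : (bx.1, c') ∈ totalShape k m a g := (shape_of_filled hsh hv).1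
  have hbx : (bx.1, bx.2) ∈ totalShape k m a g := by simpa using hb
  have hWsh : (bx.1, bx.2 - 1) ∈ totalShape k m a g :=
    shape_row hcell hbx (by omega) (by omega)
  obtain ⟨w', hw'⟩ := filled_of_shape hsh hWsh
      (by intro hcon; have := congrArg Prod.snd hcon; simp at this; omega)
  exact le_trans (hrw bx.1 c' (bx.2 - 1) v w' (by omega) hv hw') (hWb w' hw')

include hsh hb hrw in
lemma chain_right {e : ℕ} (hEb : ∀ v, T (bx.1, bx.2 + 1) = some v → e ≤ v) :
    ∀ c' v, bx.2 < c' → T (bx.1, c') = some v → e ≤ v := by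
  intro c' v hc hv
  have hcell : (bx.1, c') ∈ totalShape k m a g := (shape_of_filled hsh hv).1
  have hbx : (bx.1, bx.2) ∈ totalShape k m a g := by simpa using hb
  have hEsh : (bx.1, bx.2 + 1) ∈ totalShape k m a g :=
    shape_row hbx hcell (by omega) (by omega)
  obtain ⟨w', hw'⟩ := filled_of_shape hsh hEsh
      (by intro hcon; have := congrArg Prod.snd hcon; simp at this)
  exact le_trans (hEb w' hw') (hrw bx.1 (bx.2 + 1) c' w' v (by omega) hw' hv)

include hsh hb hcs in
lemma chain_above {w : ℕ} (hNb : ∀ v, T (bx.1 - 1, bx.2) = some v → v ≤ w) :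
    ∀ r' v, r' < bx.1 → T (r', bx.2) = some v → v ≤ w := by
  intro r' v hr hv
  have hcell : (r', bx.2) ∈ totalShape k m a g := (shape_of_filled hsh hv).1
  have hbx : (bx.1, bx.2) ∈ totalShape k m a g := by simpa using hb
  have hNsh : (bx.1 - 1, bx.2) ∈ totalShape k m a g :=
    shape_col hcell hbx (by omega) (by omega)
  obtain ⟨w', hw'⟩ := filled_of_shape hsh hNsh
      (by intro hcon; have := congrArg Prod.fst hcon; simp at this; omega)
  rcases eq_or_lt_of_le (show r' ≤ bx.1 - 1 by omega) with heq | hlt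
  · subst heq; exact hNb v hv
  · exact le_trans (le_of_lt (hcs r' (bx.1 - 1) bx.2 v w' hlt hv hw')) (hNb w' hw')

include hsh hb hcs in
lemma chain_below {e : ℕ} (hSb : ∀ v, T (bx.1 + 1, bx.2) = some v → e ≤ v) :
    ∀ r' v, bx.1 < r' → T (r', bx.2) = some v → e ≤ v := by
  intro r' v hr hv
  have hcell : (r', bx.2) ∈ totalShape k m a g := (shape_of_filled hsh hv).1
  have hbx : (bx.1, bx.2) ∈ totalShape k m a g := by simpa using hb
  have hSsh : (bx.1 + 1, bx.2) ∈ totalShape k m a g :=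
    shape_col hbx hcell (by omega) (by omega)
  obtain ⟨w', hw'⟩ := filled_of_shape hsh hSsh
      (by intro hcon; have := congrArg Prod.fst hcon; simp at this)
  rcases eq_or_lt_of_le (show bx.1 + 1 ≤ r' by omega) with heq | hlt
  · subst heq; exact hSb v hv
  · exact le_trans (hSb w' hw') (le_of_lt (hcs (bx.1 + 1) r' bx.2 w' v hlt hw' hv))

end Chains

/-- The basic swap preservation lemma: moving the box to `q` (which holds `i`)
and writing `i` into the old box position preserves shape, semistandardness
and positivity, given suitable bounds around the old box. -/
lemma swap_preserve {q : Cell} {i : ℕ}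
    (hsh : ∀ p : Cell, (T p).isSome ↔ (p ∈ totalShape k m a g ∧ p ≠ bx))
    (hb : bx ∈ totalShape k m a g)
    (hrw : RowsWeak T) (hcs : ColsStrict T) (hpos : PosEntries T) (hi : 1 ≤ i)
    (hq : T q = some i)
    (hWv : ∀ c' v, c' < bx.2 → T (bx.1, c') = some v → v ≤ i)
    (hNv : ∀ r' v, r' < bx.1 → T (r', bx.2) = some v → v < i)
    (hEv : ∀ c' v, bx.2 < c' → T (bx.1, c') = some v → i ≤ v)
    (hSv : ∀ r' v, bx.1 < r' → (r', bx.2) ≠ q → T (r', bx.2) = some v → i < v) :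
    (∀ p : Cell, ((Function.update (Function.update T q none) bx (some i)) p).isSome
        ↔ (p ∈ totalShape k m a g ∧ p ≠ q))
      ∧ RowsWeak (Function.update (Function.update T q none) bx (some i))
      ∧ ColsStrict (Function.update (Function.update T q none) bx (some i))
      ∧ PosEntries (Function.update (Function.update T q none) bx (some i)) := by
  have hbq : bx ≠ q := by
    rintro rfl; rw [box_none hsh] at hq; exact nomatch hq
  set U := Function.update (Function.update T q none) bx (some i) with hU
  have hUs : ∀ p w, U p = some w ↔ ((p = bx ∧ w = i) ∨ (p ≠ bx ∧ p ≠ q ∧ T p = some w)) :=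
    fun p w => upd2_eq_some hbq p w
  refine ⟨?_, ?_, ?_, ?_⟩
  · -- shape
    intro p
    rcases eq_or_ne p bx with rfl | hpb
    · have : U p = some i := by rw [hU]; exact Function.update_self _ _ _
      rw [this]
      simpa [hbq] using hb
    · rcases eq_or_ne p q with rfl | hpq
      · have : U p = none := by
          rw [hU, Function.update_of_ne (Ne.symm hbq), Function.update_self]
        rw [this]; simp
      · have : U p = T p := by
          rw [hU, Function.update_of_ne hpb, Function.update_of_ne hpq]
        rw [this, hsh p]
        simp [hpb, hpq]
  · -- rows
    intro r c₁ c₂ v₁ v₂ hle h1 h2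
    rcases (hUs _ _).1 h1 with ⟨e1, rfl⟩ | ⟨n1, nq1, t1⟩ <;>
      rcases (hUs _ _).1 h2 with ⟨e2, rfl⟩ | ⟨n2, nq2, t2⟩
    · rfl
    · -- first is box
      have hr : r = bx.1 := by rw [← e1]
      have hc : c₁ = bx.2 := by rw [← e1]
      subst hr
      have hc2 : bx.2 < c₂ := by
        rcases lt_or_eq_of_le (hc ▸ hle) with h | h
        · exact h
        · exact absurd (by rw [← h]) n2
      exact hEv c₂ v₂ hc2 t2
    · have hr : r = bx.1 := by rw [← e2]
      have hc : c₂ = bx.2 := by rw [← e2]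
      subst hr
      have hc1 : c₁ < bx.2 := by
        rcases lt_or_eq_of_le (hc ▸ hle) with h | h
        · exact h
        · exact absurd (by rw [h]) n1
      exact hWv c₁ v₁ hc1 t1
    · exact hrw r c₁ c₂ v₁ v₂ hle t1 t2
  · -- cols
    intro r₁ r₂ c v₁ v₂ hlt h1 h2
    rcases (hUs _ _).1 h1 with ⟨e1, rfl⟩ | ⟨n1, nq1, t1⟩ <;>
      rcases (hUs _ _).1 h2 with ⟨e2, rfl⟩ | ⟨n2, nq2, t2⟩
    · exfalso
      have : r₁ = bx.1 := by rw [← e1]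
      have h2' : r₂ = bx.1 := by rw [← e2]
      omega
    · have hr : r₁ = bx.1 := by rw [← e1]
      have hc : c = bx.2 := by rw [← e1]
      subst hr; subst hc
      exact hSv r₂ v₂ hlt nq2 t2
    · have hr : r₂ = bx.1 := by rw [← e2]
      have hc : c = bx.2 := by rw [← e2]
      subst hr; subst hc
      exact hNv r₁ v₁ hlt t1
    · exact hcs r₁ r₂ c v₁ v₂ hlt t1 t2
  · -- positivity
    intro p v hv
    rcases (hUs _ _).1 hv with ⟨_, rfl⟩ | ⟨_, _, t⟩
    · exact hi
    · exact hpos p v t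

end ShapeAux

section BallotAux

variable {k m : ℕ} {a g : Partition k m} {T : Filling}

/-- If the cell immediately east of the box holds `v`, then the suffix strictly
after the box has strictly more `v`'s than `(v+1)`'s. -/
lemma after_count_of_E {bx : Cell}
    (hsh : ∀ p : Cell, (T p).isSome ↔ (p ∈ totalShape k m a g ∧ p ≠ bx))
    (hbal : Ballot k m T) {v : ℕ} (hv : 1 ≤ v)
    (hE : T (bx.1, bx.2 + 1) = some v) :
    countP k m T (fun u => readBefore bx u) (v + 1) + 1 ≤
      countP k m T (fun u => readBefore bx u) v := by
  have hesh := (shape_of_filled hsh hE).1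
  have herect := shape_rect hesh
  have hpt : ∀ u : Cell, readBefore bx u ↔
      (u = (bx.1, bx.2 + 1) ∨ (u = (bx.1, bx.2 + 2) ∨ readBefore (bx.1, bx.2 + 2) u)) := by
    rintro ⟨x, y⟩
    unfold readBefore
    simp only [Prod.mk.injEq]
    omega
  have hdisj : ∀ u : Cell, u = (bx.1, bx.2 + 1) →
      (u = (bx.1, bx.2 + 2) ∨ readBefore (bx.1, bx.2 + 2) u) → False := by
    rintro u rfl h
    rcases h with h | h
    · have := congrArg Prod.snd h; simp at this
    · unfold readBefore at h; omega
  have hsplit : ∀ w, countP k m T (fun u => readBefore bx u) w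
      = countP k m T (fun u => u = (bx.1, bx.2 + 1)) w
        + countP k m T (fun u => u = (bx.1, bx.2 + 2) ∨ readBefore (bx.1, bx.2 + 2) u) w :=
    fun w => countP_split k m T w (fun p _ => hpt p) (fun p _ => hdisj p)
  have h1 : countP k m T (fun u => u = (bx.1, bx.2 + 1)) v = 1 :=
    countP_single k m T _ v hE herect
  have h0 : countP k m T (fun u => u = (bx.1, bx.2 + 1)) (v + 1) = 0 := by
    apply countP_eq_zero
    rintro p rfl hcon
    rw [hE] at hcon
    injection hcon with h
    omega
  have hb2 := hbal (bx.1, bx.2 + 2) v hv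
  have e1 := hsplit v
  have e2 := hsplit (v + 1)
  omega

/-- The key geometric-counting lemma: if the suffix strictly after the box has
equally many `i`'s and `(i+1)`'s, the cell directly below the box cannot hold
`i+1`. -/
lemma S_ne_of_balanced {r c i : ℕ}
    (hsh : ∀ p : Cell, (T p).isSome ↔ (p ∈ totalShape k m a g ∧ p ≠ (r, c)))
    (hb : (r, c) ∈ totalShape k m a g)
    (hrw : RowsWeak T) (hcs : ColsStrict T) (hbal : Ballot k m T) (hi : 1 ≤ i)
    (hWb : ∀ v, T (r, c - 1) = some v → v ≤ i)
    (hA : countP k m T (fun u => readBefore (r, c) u) i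
        = countP k m T (fun u => readBefore (r, c) u) (i + 1))
    (hd : T (r + 1, c) = some (i + 1)) : False := by
  classical
  have hdsh : (r + 1, c) ∈ totalShape k m a g := (shape_of_filled hsh hd).1
  have hbnone : T (r, c) = none := box_none hsh
  -- leftmost i+1 in row r+1
  set F : Finset ℕ := (Finset.range m).filter (fun c' => T (r + 1, c') = some (i + 1))
    with hF
  have hcF : c ∈ F := by
    rw [hF, Finset.mem_filter, Finset.mem_range]
    exact ⟨(shape_rect hdsh).2, hd⟩
  have hFne : F.Nonempty := ⟨c, hcF⟩
  set ct := F.min' hFne with hctdef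
  have hctmem : T (r + 1, ct) = some (i + 1) := (Finset.mem_filter.1 (F.min'_mem hFne)).2
  have hmin : ∀ c' v', T (r + 1, c') = some v' → v' = i + 1 → ct ≤ c' := by
    intro c' v' h hv'
    subst hv'
    apply F.min'_le
    rw [hF, Finset.mem_filter, Finset.mem_range]
    exact ⟨(shape_rect (shape_of_filled hsh h).1).2, h⟩
  have hctc : ct ≤ c := hmin c _ hd rfl
  -- count abbreviations: everything phrased via countP with fixed predicates
  -- (a) split of the suffix at t = (r+1, ct)
  have ha : ∀ w, countP k m T (fun u => u = (r + 1, ct) ∨ readBefore (r + 1, ct) u) w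
      = countP k m T (fun u => u.1 = r + 1 ∧ ct ≤ u.2) w
        + countP k m T (fun u => u.1 ≤ r) w := by
    intro w
    apply countP_split k m T w
    · rintro ⟨x, y⟩ _
      unfold readBefore
      simp only [Prod.mk.injEq]
      omega
    · rintro ⟨x, y⟩ _ h1 h2
      simp only [Prod.mk.injEq] at h1 h2
      omega
  -- (b) split of "rows ≤ r" into row-r-left and strictly-after-box
  have hbsplit : ∀ w, countP k m T (fun u => u.1 ≤ r) w
      = countP k m T (fun u => u.1 = r ∧ u.2 < c) w
        + countP k m T (fun u => readBefore (r, c) u) w := by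
    intro w
    apply countP_split k m T w
    · rintro ⟨x, y⟩ hxy
      have hne : ¬ (x = r ∧ y = c) := by
        rintro ⟨rfl, rfl⟩
        rw [hbnone] at hxy; exact nomatch hxy
      unfold readBefore
      simp only [Prod.mk.injEq]
      omega
    · rintro ⟨x, y⟩ _ h1 h2
      unfold readBefore at h2
      simp only [Prod.mk.injEq] at h1 h2
      omega
  -- (c) no i in row r+1 at column ≥ ct
  have hc0 : countP k m T (fun u => u.1 = r + 1 ∧ ct ≤ u.2) i = 0 := by
    apply countP_eq_zero
    rintro ⟨x, y⟩ ⟨hx, hy⟩ hcon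
    have hx' : x = r + 1 := hx
    have hy' : ct ≤ y := hy
    subst hx'
    rcases eq_or_lt_of_le hy' with heq | hlt
    · rw [← heq] at hcon; rw [hctmem] at hcon; injection hcon with h; omega
    · have := hrw (r + 1) ct y (i + 1) i (by omega) hctmem hcon
      omega
  -- (d) no i+1 in row r left of c
  have hd0 : countP k m T (fun u => u.1 = r ∧ u.2 < c) (i + 1) = 0 := by
    apply countP_eq_zero
    rintro ⟨x, y⟩ ⟨hx, hy⟩ hcon
    have hx' : r = x := Eq.symm hx
    subst hx'
    have hy' : y < c := hy
    have := chain_left hsh hb hrw hWb y (i + 1) hy' hcon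
    omega
  -- (e) all (i+1)'s of row r+1 are at column ≥ ct
  have he : countP k m T (fun u => u.1 = r + 1) (i + 1)
      = countP k m T (fun u => u.1 = r + 1 ∧ ct ≤ u.2) (i + 1) := by
    apply countP_congr
    rintro ⟨x, y⟩ hcon
    constructor
    · intro hx
      have hx' : x = r + 1 := hx
      subst hx'
      exact ⟨rfl, hmin y _ hcon rfl⟩
    · exact fun h => h.1
  -- (f) split row r+1 at column c
  have hf1 : countP k m T (fun u => u.1 = r + 1) (i + 1)
      = countP k m T (fun u => u.1 = r + 1 ∧ u.2 < c) (i + 1)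
        + countP k m T (fun u => u.1 = r + 1 ∧ c ≤ u.2) (i + 1) := by
    apply countP_split k m T (i + 1)
    · rintro ⟨x, y⟩ _
      simp only [Prod.mk.injEq]
      omega
    · rintro ⟨x, y⟩ _ h1 h2
      simp only [Prod.mk.injEq] at h1 h2
      omega
  have hf2 : countP k m T (fun u => u.1 = r + 1 ∧ c ≤ u.2) (i + 1)
      = countP k m T (fun u => u = (r + 1, c)) (i + 1)
        + countP k m T (fun u => u.1 = r + 1 ∧ c < u.2) (i + 1) := by
    apply countP_split k m T (i + 1)
    · rintro ⟨x, y⟩ _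
      simp only [Prod.mk.injEq]
      omega
    · rintro ⟨x, y⟩ _ h1 h2
      have h1' : x = r + 1 := congrArg Prod.fst h1
      have h1'' : y = c := congrArg Prod.snd h1
      simp only [Prod.mk.injEq] at h2
      omega
  have hg1 : countP k m T (fun u => u = (r + 1, c)) (i + 1) = 1 :=
    countP_single k m T _ (i + 1) hd (shape_rect hdsh)
  -- (h) injection : i's in row r left of c ↪ (i+1)'s in row r+1 left of c
  have hinj : countP k m T (fun u => u.1 = r ∧ u.2 < c) i
      ≤ countP k m T (fun u => u.1 = r + 1 ∧ u.2 < c) (i + 1) := by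
    apply countP_le_of_inj k m T i (i + 1) (fun u => (u.1 + 1, u.2))
    · rintro ⟨x, y⟩ ⟨hx, hy⟩ hcon
      have hx' : r = x := Eq.symm hx
      subst hx'
      have hy' : y < c := hy
      have hysh : (r, y) ∈ totalShape k m a g := (shape_of_filled hsh hcon).1
      have hcell : (r + 1, y) ∈ totalShape k m a g :=
        shape_downleft hysh hdsh (by omega)
      obtain ⟨w', hw'⟩ := filled_of_shape hsh hcell
          (by intro h; have := congrArg Prod.fst h; simp at this)
      have hlt : i < w' := hcs r (r + 1) y i w' (by omega) hcon hw'
      have hle : w' ≤ i + 1 := hrw (r + 1) y c w' (i + 1) (by omega) hw' hd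
      have : w' = i + 1 := by omega
      subst this
      exact ⟨⟨rfl, hy'⟩, hw', (shape_rect hcell).1, (shape_rect hcell).2⟩
    · rintro ⟨x₁, y₁⟩ ⟨x₂, y₂⟩ _ _ h
      have h1 : x₁ + 1 = x₂ + 1 := congrArg Prod.fst h
      have h2 : y₁ = y₂ := congrArg Prod.snd h
      simp only [Prod.mk.injEq]
      omega
  -- ballot at t for the pair (i, i+1)
  have hball := hbal (r + 1, ct) i hi
  have ha1 := ha i
  have ha2 := ha (i + 1)
  have hb1 := hbsplit i
  have hb2 := hbsplit (i + 1)
  omega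

end BallotAux

section BallotSwap

variable {k m : ℕ} {T : Filling} {bx q : Cell} {i : ℕ}

/-- Ballotness is preserved by a Phase 1 move. -/
lemma ballot_p1
    (hTb : T bx = none) (hq : T q = some i)
    (hbr : bx.1 < k ∧ bx.2 < m) (hqr : q.1 < k ∧ q.2 < m)
    (hbal : Ballot k m T) (hi : 1 ≤ i)
    (hqb : readBefore q bx)
    (hmax : ∀ q', T q' = some i → readBefore q' bx → q' = q ∨ readBefore q' q)
    (hstar : 2 ≤ i → countP k m T (fun u => readBefore bx u) i + 1 ≤
      countP k m T (fun u => readBefore bx u) (i - 1)) :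
    Ballot k m (Function.update (Function.update T q none) bx (some i)) := by
  intro p j hj
  have swapj := countP_swap k m T bx q i hTb hq hbr hqr (fun u => u = p ∨ readBefore p u) j
  have swapj1 := countP_swap k m T bx q i hTb hq hbr hqr
    (fun u => u = p ∨ readBefore p u) (j + 1)
  have hqbP : (q = p ∨ readBefore p q) → (bx = p ∨ readBefore p bx) := by
    rintro (rfl | h)
    · exact Or.inr hqb
    · exact Or.inr (rb_trans h hqb)
  have hballj := hbal p j hj
  by_cases hij : j = i
  · subst hij
    have hj1 : ¬ (j + 1 = j) := by omega
    by_cases hPq : (q = p ∨ readBefore p q)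
    · have hPb := hqbP hPq
      rw [if_pos ⟨(by tauto), rfl⟩, if_pos ⟨(by tauto), rfl⟩] at swapj
      rw [if_neg (by intro hcon; omega), if_neg (by intro hcon; omega)] at swapj1
      omega
    · rw [if_neg (by intro hcon; exact hPq (by tauto))] at swapj
      rw [if_neg (by intro hcon; omega), if_neg (by intro hcon; omega)] at swapj1
      by_cases hPb : (bx = p ∨ readBefore p bx)
      · rw [if_pos ⟨(by tauto), rfl⟩] at swapj
        omega
      · rw [if_neg (by intro hcon; exact hPb (by tauto))] at swapj
        omega
  · by_cases hij1 : j + 1 = i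
    · -- j = i - 1 ≥ 1
      subst hij1
      rw [if_neg (by intro hcon; omega), if_neg (by intro hcon; omega)] at swapj
      by_cases hPq : (q = p ∨ readBefore p q)
      · have hPb := hqbP hPq
        rw [if_pos ⟨(by tauto), rfl⟩, if_pos ⟨(by tauto), rfl⟩] at swapj1
        omega
      · rw [if_neg (by intro hcon; exact hPq (by tauto))] at swapj1
        by_cases hPb : (bx = p ∨ readBefore p bx)
        · rw [if_pos ⟨(by tauto), rfl⟩] at swapj1
          -- the hard case: the i moved into the suffix
          have hA1 : countP k m T (fun u => u = p ∨ readBefore p u) (j + 1)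
              ≤ countP k m T (fun u => readBefore bx u) (j + 1) := by
            apply countP_mono
            intro u hu hval
            rcases rb_total u bx with rfl | hub | hbu
            · rw [hTb] at hval; exact nomatch hval
            · exfalso
              rcases hmax u hval hub with rfl | huq
              · exact hPq hu
              · rcases hu with rfl | hpu
                · exact hPq (Or.inr huq)
                · exact hPq (Or.inr (rb_trans hpu huq))
            · exact hbu
          have hA2 : countP k m T (fun u => readBefore bx u) j
              ≤ countP k m T (fun u => u = p ∨ readBefore p u) j := by
            apply countP_mono
            intro u hu _
            rcases hPb with rfl | hpb
            · exact Or.inr hu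
            · exact Or.inr (rb_trans hpb hu)
          have hst := hstar (by omega)
          rw [Nat.add_sub_cancel] at hst
          omega
        · rw [if_neg (by intro hcon; exact hPb (by tauto))] at swapj1
          omega
    · rw [if_neg (by intro hcon; omega), if_neg (by intro hcon; omega)] at swapj
      rw [if_neg (by intro hcon; omega), if_neg (by intro hcon; omega)] at swapj1
      omega

/-- Ballotness is preserved by a Phase 2 move. -/
lemma ballot_p2
    (hTb : T bx = none) (hq : T q = some i)
    (hbr : bx.1 < k ∧ bx.2 < m) (hqr : q.1 < k ∧ q.2 < m)
    (hbal : Ballot k m T) (hi : 1 ≤ i)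
    (hbq : readBefore bx q)
    (hmin : ∀ q', T q' = some i → readBefore bx q' → q' = q ∨ readBefore q q')
    (hcond : countP k m T (fun u => readBefore bx u) (i + 1) + 1 ≤
      countP k m T (fun u => readBefore bx u) i) :
    Ballot k m (Function.update (Function.update T q none) bx (some i)) := by
  intro p j hj
  have swapj := countP_swap k m T bx q i hTb hq hbr hqr (fun u => u = p ∨ readBefore p u) j
  have swapj1 := countP_swap k m T bx q i hTb hq hbr hqr
    (fun u => u = p ∨ readBefore p u) (j + 1)
  have hPbq : (bx = p ∨ readBefore p bx) → (q = p ∨ readBefore p q) := by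
    rintro (rfl | h)
    · exact Or.inr hbq
    · exact Or.inr (rb_trans h hbq)
  have hballj := hbal p j hj
  by_cases hij : j = i
  · subst hij
    rw [if_neg (by intro hcon; omega), if_neg (by intro hcon; omega)] at swapj1
    by_cases hPq : (q = p ∨ readBefore p q)
    · by_cases hPb : (bx = p ∨ readBefore p bx)
      · rw [if_pos ⟨hPq, rfl⟩, if_pos ⟨hPb, rfl⟩] at swapj
        omega
      · rw [if_pos ⟨hPq, rfl⟩, if_neg (fun hcon => hPb hcon.1)] at swapj
        -- the hard case: an i was removed from the suffix
        have hbp : readBefore bx p := by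
          rcases rb_total bx p with rfl | h | h
          · exact absurd (Or.inl rfl) hPb
          · exact h
          · exact absurd (Or.inr h) hPb
        have hA1 : countP k m T (fun u => u = p ∨ readBefore p u) (j + 1)
            ≤ countP k m T (fun u => readBefore bx u) (j + 1) := by
          apply countP_mono
          intro u hu _
          rcases hu with rfl | hpu
          · exact hbp
          · exact rb_trans hbp hpu
        have hA2 : countP k m T (fun u => readBefore bx u) j
            ≤ countP k m T (fun u => u = p ∨ readBefore p u) j := by
          apply countP_mono
          intro u hval hu
          rcases hmin u hu hval with rfl | hqu
          · exact hPq
          · rcases hPq with rfl | hpq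
            · exact Or.inr hqu
            · exact Or.inr (rb_trans hpq hqu)
        omega
    · have hPb : ¬ (bx = p ∨ readBefore p bx) := fun h => hPq (hPbq h)
      rw [if_neg (fun hcon => hPq hcon.1), if_neg (fun hcon => hPb hcon.1)] at swapj
      omega
  · by_cases hij1 : j + 1 = i
    · subst hij1
      rw [if_neg (by intro hcon; omega), if_neg (by intro hcon; omega)] at swapj
      by_cases hPq : (q = p ∨ readBefore p q)
      · rw [if_pos ⟨(by tauto), rfl⟩] at swapj1
        by_cases hPb : (bx = p ∨ readBefore p bx)
        · rw [if_pos ⟨(by tauto), rfl⟩] at swapj1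
          omega
        · rw [if_neg (by intro hcon; exact hPb (by tauto))] at swapj1
          omega
      · rw [if_neg (by intro hcon; exact hPq (by tauto)),
          if_neg (by intro hcon; exact (hPq (hPbq (by tauto))))] at swapj1
        omega
    · rw [if_neg (by intro hcon; omega), if_neg (by intro hcon; omega)] at swapj
      rw [if_neg (by intro hcon; omega), if_neg (by intro hcon; omega)] at swapj1
      omega

end BallotSwap

/-- The running invariant of the local evacuation-shuffle. -/
structure EshInv (k m : ℕ) (a g : Partition k m) (i : ℕ) (ph : Bool) (z : PState) : Prop where
  hione : 1 ≤ i
  hbox : z.box ∈ totalShape k m a g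
  hsh : ∀ p : Cell, (z.T p).isSome ↔ (p ∈ totalShape k m a g ∧ p ≠ z.box)
  hrw : RowsWeak z.T
  hcs : ColsStrict z.T
  hpos : PosEntries z.T
  hbal : Ballot k m z.T
  hWf : ph = false → ∀ v, z.T (z.box.1, z.box.2 - 1) = some v → v ≤ i - 1
  hWt : ph = true → ∀ v, z.T (z.box.1, z.box.2 - 1) = some v → v ≤ i
  hN : ∀ v, z.T (z.box.1 - 1, z.box.2) = some v → v + 1 ≤ i
  hE : ∀ v, z.T (z.box.1, z.box.2 + 1) = some v → i ≤ v
  hSf : ph = false → ∀ v, z.T (z.box.1 + 1, z.box.2) = some v → i ≤ v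
  hSt : ph = true → ∀ v, z.T (z.box.1 + 1, z.box.2) = some v → i + 1 ≤ v
  hstar : ph = false → 2 ≤ i →
    countP k m z.T (fun u => readBefore z.box u) i + 1 ≤
      countP k m z.T (fun u => readBefore z.box u) (i - 1)

section InvMain

variable {k m : ℕ} {a b g : Partition k m}

lemma inv_init {x : PState} (hx : MemLR1 k m a b g x) : EshInv k m a g 1 false x := by
  obtain ⟨hbox, hsh, hrw, hcs, hpos, hbal, _, hWn, hNn⟩ := hx
  have hW0 : x.T (x.box.1, x.box.2 - 1) = none := by
    by_contra h
    exact hWn h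
  have hN0 : x.T (x.box.1 - 1, x.box.2) = none := by
    by_contra h
    exact hNn h
  refine ⟨le_refl 1, hbox, hsh, hrw, hcs, hpos, hbal, ?_, ?_, ?_, ?_, ?_, ?_, ?_⟩
  · intro _ v hv; rw [hW0] at hv; exact nomatch hv
  · intro h; exact absurd h (by decide)
  · intro v hv; rw [hN0] at hv; exact nomatch hv
  · intro v hv; exact hpos _ v hv
  · intro _ v hv; exact hpos _ v hv
  · intro h; exact absurd h (by decide)
  · intro _ h; omega

lemma inv_step_p1to2 {i : ℕ} {x : PState} (hinv : EshInv k m a g i false x)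
    (h : ¬ phase1Cond i x) : EshInv k m a g i true x := by
  refine ⟨hinv.hione, hinv.hbox, hinv.hsh, hinv.hrw, hinv.hcs, hinv.hpos, hinv.hbal,
    ?_, ?_, hinv.hN, hinv.hE, ?_, ?_, ?_⟩
  · intro hf; exact absurd hf (by decide)
  · intro _ v hv; have := hinv.hWf rfl v hv; omega
  · intro hf; exact absurd hf (by decide)
  · intro _ v hv
    have hge := hinv.hSf rfl v hv
    rcases eq_or_lt_of_le hge with heq | hlt
    · exfalso
      refine h ⟨(x.box.1 + 1, x.box.2), ?_, Or.inl (Nat.lt_succ_self _)⟩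
      rw [← heq] at hv; exact hv
    · omega
  · intro hf; exact absurd hf (by decide)

lemma inv_step_p2inc {i : ℕ} {x : PState} (hinv : EshInv k m a g i true x)
    (hc : ¬ phase2Cond k m i x) : EshInv k m a g (i + 1) true x := by
  have hi := hinv.hione
  refine ⟨by omega, hinv.hbox, hinv.hsh, hinv.hrw, hinv.hcs, hinv.hpos, hinv.hbal,
    ?_, ?_, ?_, ?_, ?_, ?_, ?_⟩
  · intro hf; exact absurd hf (by decide)
  · intro _ v hv; have := hinv.hWt rfl v hv; omega
  · intro v hv; have := hinv.hN v hv; omega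
  · intro v hv
    have hge := hinv.hE v hv
    rcases eq_or_lt_of_le hge with heq | hlt
    · exfalso
      have hv' : x.T (x.box.1, x.box.2 + 1) = some i := by rw [← heq] at hv; exact hv
      have := after_count_of_E hinv.hsh hinv.hbal hi hv'
      exact hc (by unfold phase2Cond; omega)
    · omega
  · intro hf; exact absurd hf (by decide)
  · intro _ v hv
    have hge := hinv.hSt rfl v hv
    rcases eq_or_lt_of_le hge with heq | hlt
    · exfalso
      have hv' : x.T (x.box.1 + 1, x.box.2) = some (i + 1) := by rw [← heq] at hv; exact hv
      have e1 : countP k m x.T (fun u => readBefore x.box u) i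
          = countP k m x.T
            (fun u => u = (x.box.1, x.box.2 + 1) ∨ readBefore (x.box.1, x.box.2 + 1) u) i :=
        countP_congr k m x.T i (fun p _ => rb_succ_iff x.box p)
      have e2 : countP k m x.T (fun u => readBefore x.box u) (i + 1)
          = countP k m x.T
            (fun u => u = (x.box.1, x.box.2 + 1) ∨ readBefore (x.box.1, x.box.2 + 1) u) (i + 1) :=
        countP_congr k m x.T (i + 1) (fun p _ => rb_succ_iff x.box p)
      have hb := hinv.hbal (x.box.1, x.box.2 + 1) i hi
      unfold phase2Cond at hc
      have hA : countP k m x.T (fun u => readBefore x.box u) i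
          = countP k m x.T (fun u => readBefore x.box u) (i + 1) := by omega
      exact S_ne_of_balanced hinv.hsh hinv.hbox hinv.hrw hinv.hcs hinv.hbal hi
        (hinv.hWt rfl) hA hv'
    · omega
  · intro hf; exact absurd hf (by decide)

lemma inv_step_p2 {i : ℕ} {x : PState} {q : Cell} (hinv : EshInv k m a g i true x)
    (hc : phase2Cond k m i x) (h : Phase2Move i x q) :
    EshInv k m a g i true (swapState x q i) := by
  obtain ⟨hq, hbq, hmin⟩ := h
  have hi := hinv.hione
  have hsh := hinv.hsh
  have hbox := hinv.hbox
  have hrw := hinv.hrw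
  have hcs := hinv.hcs
  have hTb : x.T x.box = none := box_none hsh
  have hqsh := shape_of_filled hsh hq
  have hbr : x.box.1 < k ∧ x.box.2 < m := shape_rect hbox
  have hqr : q.1 < k ∧ q.2 < m := shape_rect hqsh.1
  have hbq' : x.box ≠ q := fun he => rb_irrefl q (he ▸ hbq)
  have hWv : ∀ c' v, c' < x.box.2 → x.T (x.box.1, c') = some v → v ≤ i :=
    chain_left hsh hbox hrw (hinv.hWt rfl)
  have hNv : ∀ r' v, r' < x.box.1 → x.T (r', x.box.2) = some v → v < i := by
    intro r' v hr hv
    have := chain_above hsh hbox hcs (w := i - 1)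
      (fun v hv => by have := hinv.hN v hv; omega) r' v hr hv
    omega
  have hEv : ∀ c' v, x.box.2 < c' → x.T (x.box.1, c') = some v → i ≤ v :=
    chain_right hsh hbox hrw hinv.hE
  have hSv : ∀ r' v, x.box.1 < r' → (r', x.box.2) ≠ q → x.T (r', x.box.2) = some v → i < v := by
    intro r' v hr _ hv
    have := chain_below hsh hbox hcs (e := i + 1) (hinv.hSt rfl) r' v hr hv
    omega
  obtain ⟨hsh', hrw', hcs', hpos'⟩ :=
    swap_preserve hsh hbox hrw hcs hinv.hpos hi hq hWv hNv hEv hSv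
  have hbal' := ballot_p2 hTb hq hbr hqr hinv.hbal hi hbq hmin
    (by unfold phase2Cond at hc; omega)
  refine ⟨hi, hqsh.1, hsh', hrw', hcs', hpos', hbal', ?_, ?_, ?_, ?_, ?_, ?_, ?_⟩
  · intro hf; exact absurd hf (by decide)
  · -- hWt at the new box q
    intro _ v hv
    simp only [swapState] at hv
    rcases (upd2_eq_some hbq' _ _).1 hv with ⟨heq, hvi⟩ | ⟨hne1, hne2, ht⟩
    · omega
    · exact hrw q.1 (q.2 - 1) q.2 v i (by omega) ht hq
  · -- hN at q
    intro v hv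
    simp only [swapState] at hv
    rcases (upd2_eq_some hbq' _ _).1 hv with ⟨heq, hvi⟩ | ⟨hne1, hne2, ht⟩
    · exfalso
      rw [← heq] at hbq
      unfold readBefore at hbq
      omega
    · by_cases h0 : q.1 = 0
      · exfalso
        apply hne2
        have h1 : q.1 - 1 = q.1 := by omega
        rw [h1]
      · have := hcs (q.1 - 1) q.1 q.2 v i (by omega) ht hq
        omega
  · -- hE at q
    intro v hv
    simp only [swapState] at hv
    rcases (upd2_eq_some hbq' _ _).1 hv with ⟨heq, hvi⟩ | ⟨hne1, hne2, ht⟩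
    · exfalso
      rw [← heq] at hbq
      unfold readBefore at hbq
      omega
    · exact hrw q.1 q.2 (q.2 + 1) i v (by omega) hq ht
  · intro hf; exact absurd hf (by decide)
  · -- hSt at q
    intro _ v hv
    simp only [swapState] at hv
    rcases (upd2_eq_some hbq' _ _).1 hv with ⟨heq, hvi⟩ | ⟨hne1, hne2, ht⟩
    · exfalso
      have hNq : x.T (x.box.1 - 1, x.box.2) = some i := by
        rw [← heq]; exact hq
      have := hinv.hN i hNq
      omega
    · have := hcs q.1 (q.1 + 1) q.2 i v (Nat.lt_succ_self _) hq ht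
      omega
  · intro hf; exact absurd hf (by decide)

lemma inv_step_p1 {i : ℕ} {x : PState} {q : Cell} (hinv : EshInv k m a g i false x)
    (h : Phase1Move i x q) :
    EshInv k m a g (i + 1) false (swapState x q i) := by
  obtain ⟨hq, hqb, hmax⟩ := h
  have hi := hinv.hione
  have hsh := hinv.hsh
  have hbox := hinv.hbox
  have hrw := hinv.hrw
  have hcs := hinv.hcs
  have hTb : x.T x.box = none := box_none hsh
  have hqsh := shape_of_filled hsh hq
  have hbr : x.box.1 < k ∧ x.box.2 < m := shape_rect hbox
  have hqr : q.1 < k ∧ q.2 < m := shape_rect hqsh.1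
  have hbq' : x.box ≠ q := fun he => rb_irrefl q (he ▸ hqb)
  have hEv : ∀ c' v, x.box.2 < c' → x.T (x.box.1, c') = some v → i ≤ v :=
    chain_right hsh hbox hrw hinv.hE
  -- the nearest prior i is in a strictly lower row
  have hq1 : x.box.1 < q.1 := by
    unfold readBefore at hqb
    rcases hqb with h1 | ⟨h1, h2⟩
    · exact h1
    · exfalso
      have hqcell : x.T (x.box.1, q.2) = some i := by
        have he : ((x.box.1 : ℕ), q.2) = q := by rw [← h1]
        rw [he]; exact hq
      have := chain_left hsh hbox hrw (hinv.hWf rfl) q.2 i h2 hqcell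
      omega
  have hqb2 : readBefore q x.box := hqb
  have hWv : ∀ c' v, c' < x.box.2 → x.T (x.box.1, c') = some v → v ≤ i := by
    intro c' v hc hv
    have := chain_left hsh hbox hrw (hinv.hWf rfl) c' v hc hv
    omega
  have hNv : ∀ r' v, r' < x.box.1 → x.T (r', x.box.2) = some v → v < i := by
    intro r' v hr hv
    have := chain_above hsh hbox hcs (w := i - 1)
      (fun v hv => by have := hinv.hN v hv; omega) r' v hr hv
    omega
  have hSv : ∀ r' v, x.box.1 < r' → (r', x.box.2) ≠ q → x.T (r', x.box.2) = some v → i < v := by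
    by_cases hqS : q = (x.box.1 + 1, x.box.2)
    · intro r' v hr hne hv
      have hr2 : x.box.1 + 1 < r' := by
        rcases eq_or_lt_of_le (show x.box.1 + 1 ≤ r' by omega) with heq | hlt
        · exfalso
          apply hne
          rw [hqS, ← heq]
        · exact hlt
      have hq' : x.T (x.box.1 + 1, x.box.2) = some i := by rw [← hqS]; exact hq
      exact hcs (x.box.1 + 1) r' x.box.2 i v hr2 hq' hv
    · have hScell : ∀ s, x.T (x.box.1 + 1, x.box.2) = some s → i + 1 ≤ s := by
        intro s hs
        have hge : i ≤ s := hinv.hSf rfl s hs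
        rcases eq_or_lt_of_le hge with heq | hlt
        · exfalso
          have hs' : x.T (x.box.1 + 1, x.box.2) = some i := by rw [← heq] at hs; exact hs
          have hbefore : readBefore (x.box.1 + 1, x.box.2) x.box := Or.inl (Nat.lt_succ_self _)
          rcases hmax _ hs' hbefore with heqq | hlt2
          · exact hqS heqq.symm
          · unfold readBefore at hlt2
            rcases hlt2 with hlt2 | ⟨he1, he2⟩
            · exact absurd hlt2 (by omega)
            · -- geometry: the cell (x.box.1, q.2) is filled, ≥ i and < i
              have he1' : x.box.1 + 1 = q.1 := he1
              have he2' : x.box.2 < q.2 := he2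
              have hqsh' : ((x.box.1 : ℕ) + 1, q.2) ∈ totalShape k m a g := by
                have he : ((x.box.1 : ℕ) + 1, q.2) = q := by rw [he1']
                rw [he]; exact hqsh.1
              have hbox' : ((x.box.1 : ℕ), x.box.2) ∈ totalShape k m a g := hbox
              have hcellsh : ((x.box.1 : ℕ), q.2) ∈ totalShape k m a g :=
                shape_upright hqsh' hbox' (by omega)
              obtain ⟨w, hw⟩ := filled_of_shape hsh hcellsh
                (by intro hcon
                    have h2 : q.2 = x.box.2 := by rw [← hcon]
                    omega)
              have hwge : i ≤ w := hEv q.2 w (by omega) hw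
              have hwlt : w < i := by
                have hqcell : x.T ((x.box.1 : ℕ) + 1, q.2) = some i := by
                  have he : ((x.box.1 : ℕ) + 1, q.2) = q := by rw [he1']
                  rw [he]; exact hq
                exact hcs x.box.1 (x.box.1 + 1) q.2 w i (Nat.lt_succ_self _) hw hqcell
              omega
        · omega
      intro r' v hr _ hv
      have := chain_below hsh hbox hcs (e := i + 1) hScell r' v hr hv
      omega
  obtain ⟨hsh', hrw', hcs', hpos'⟩ :=
    swap_preserve hsh hbox hrw hcs hinv.hpos hi hq hWv hNv hEv hSv
  have hbal' := ballot_p1 hTb hq hbr hqr hinv.hbal hi hqb hmax (hinv.hstar rfl)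
  refine ⟨by omega, hqsh.1, hsh', hrw', hcs', hpos', hbal', ?_, ?_, ?_, ?_, ?_, ?_, ?_⟩
  · -- hWf at q, value i+1
    intro _ v hv
    simp only [swapState] at hv
    rcases (upd2_eq_some hbq' _ _).1 hv with ⟨heq, hvi⟩ | ⟨hne1, hne2, ht⟩
    · exfalso
      have h1 : q.1 = x.box.1 := by rw [← heq]
      omega
    · have := hrw q.1 (q.2 - 1) q.2 v i (by omega) ht hq
      omega
  · intro hf; exact absurd hf (by decide)
  · -- hN at q, value i+1
    intro v hv
    simp only [swapState] at hv
    rcases (upd2_eq_some hbq' _ _).1 hv with ⟨heq, hvi⟩ | ⟨hne1, hne2, ht⟩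
    · omega
    · have := hcs (q.1 - 1) q.1 q.2 v i (by omega) ht hq
      omega
  · -- hE at q, value i+1
    intro v hv
    simp only [swapState] at hv
    rcases (upd2_eq_some hbq' _ _).1 hv with ⟨heq, hvi⟩ | ⟨hne1, hne2, ht⟩
    · exfalso
      have h1 : q.1 = x.box.1 := by rw [← heq]
      omega
    · have hge : i ≤ v := hrw q.1 q.2 (q.2 + 1) i v (by omega) hq ht
      rcases eq_or_lt_of_le hge with heqv | h
      · exfalso
        have ht' : x.T (q.1, q.2 + 1) = some i := by rw [← heqv] at ht; exact ht
        rcases hmax _ ht' (Or.inl hq1) with heqq | hrb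
        · have h2 : ((q.1, q.2 + 1) : Cell).2 = q.2 := by rw [heqq]
          have h2' : q.2 + 1 = q.2 := h2
          omega
        · unfold readBefore at hrb
          omega
      · omega
  · -- hSf at q, value i+1
    intro _ v hv
    simp only [swapState] at hv
    rcases (upd2_eq_some hbq' _ _).1 hv with ⟨heq, hvi⟩ | ⟨hne1, hne2, ht⟩
    · exfalso
      have h1 : q.1 + 1 = x.box.1 := by rw [← heq]
      omega
    · have := hcs q.1 (q.1 + 1) q.2 i v (Nat.lt_succ_self _) hq ht
      omega
  · intro hf; exact absurd hf (by decide)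
  · -- hstar at q, value i+1
    intro _ _
    simp only [swapState]
    rw [Nat.add_sub_cancel]
    have s1 := countP_swap k m x.T x.box q i hTb hq hbr hqr (fun u => readBefore q u) i
    have s2 := countP_swap k m x.T x.box q i hTb hq hbr hqr (fun u => readBefore q u) (i + 1)
    rw [if_neg (fun hcon => rb_irrefl q hcon.1), if_pos ⟨hqb, rfl⟩] at s1
    rw [if_neg (by intro hcon; omega), if_neg (by intro hcon; omega)] at s2
    have e1 : countP k m x.T (fun u => readBefore q u) i
        = countP k m x.T (fun u => u = (q.1, q.2 + 1) ∨ readBefore (q.1, q.2 + 1) u) i :=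
      countP_congr k m x.T i (fun p _ => rb_succ_iff q p)
    have e2 : countP k m x.T (fun u => readBefore q u) (i + 1)
        = countP k m x.T (fun u => u = (q.1, q.2 + 1) ∨ readBefore (q.1, q.2 + 1) u) (i + 1) :=
      countP_congr k m x.T (i + 1) (fun p _ => rb_succ_iff q p)
    have hb2 := hinv.hbal (q.1, q.2 + 1) i hi
    omega

lemma inv_step {lb : ℕ} {s t : ℕ × Bool × PState}
    (hstep : Step k m lb s t) (hinv : EshInv k m a g s.1 s.2.1 s.2.2) :
    EshInv k m a g t.1 t.2.1 t.2.2 := by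
  cases hstep with
  | @p1 i x q hi h => exact inv_step_p1 hinv h
  | @p1to2 i x hi h => exact inv_step_p1to2 hinv h
  | @p2 i x q hi hc h => exact inv_step_p2 hinv hc h
  | @p2inc i x hi hc => exact inv_step_p2inc hinv hc

end InvMain

/-- Throughout the local evacuation-shuffle algorithm, the
punctured tableau (omitting the box) has weakly increasing rows, strictly
increasing columns, and ballot reading word. -/
theorem stmt_2 (k m : ℕ) (hk : 0 < k) (hm : 0 < m) (a b g : Partition k m)
    (hsz : a.size + b.size + g.size = k * m - 1)
    (x : PState) (hx : MemLR1 k m a b g x) :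
    ∀ (i : ℕ) (ph : Bool) (z : PState),
      Relation.ReflTransGen (Step k m b.length) (1, false, x) (i, ph, z) →
      RowsWeak z.T ∧ ColsStrict z.T ∧ Ballot k m z.T := by
  intro i ph z h
  have key : ∀ s t : ℕ × Bool × PState, Relation.ReflTransGen (Step k m b.length) s t →
      EshInv k m a g s.1 s.2.1 s.2.2 → EshInv k m a g t.1 t.2.1 t.2.2 := by
    intro s t hrt
    induction hrt with
    | refl => exact id
    | tail _ h2 ih => exact fun hs => inv_step h2 (ih hs)
  have hinv := key _ _ h (inv_init hx)
  exact ⟨hinv.hrw, hinv.hcs, hinv.hbal⟩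

end SC
end

section
/- During Phase 2 of the local evacuation-shuffle with current value i, if the suffix of the reading word strictly after ⊠ contains strictly more i's than (i+1)'s, then there exists an entry equal to i occurring after ⊠ in reading order. Consequently every Phase 2 move of the algorithm is well-defined and the algorithm terminates. -/
/-
Common combinatorial framework for the paper
"Monodromy and K-theory of Schubert curves via generalized jeu de taquin"
(Gillespie–Levinson).

Cells are pairs (row, column), 0-indexed, with row 0 the top row (English
convention).  A skew tableau is modelled as a `Filling`, i.e. a function
`Cell → Option ℕ`; `none` means the cell is not in the (filled part of the)
shape.  A punctured tableau is a filling together with a distinguished empty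
cell `box` (the ⊠).
-/

namespace SC

/-! ### Auxiliary lemmas for Statement 3 -/

/-- Invariant: the box and all filled cells lie in the `k × m` rectangle. -/
def Inv3 (k m : ℕ) (z : PState) : Prop :=
  z.box.1 < k ∧ z.box.2 < m ∧ ∀ p v, z.T p = some v → p.1 < k ∧ p.2 < m

/-- Numeric key realizing the reading order on the rectangle. -/
def keyN (k m : ℕ) (p : Cell) : ℕ := (k - 1 - p.1) * m + p.2

lemma readBefore_trichotomy {p q : Cell} (h : p ≠ q) :
    readBefore p q ∨ readBefore q p := by
  have h' : ¬ (p.1 = q.1 ∧ p.2 = q.2) := fun hpq => h (Prod.ext_iff.mpr hpq)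
  unfold readBefore
  omega

lemma keyN_lt {k m : ℕ} {p q : Cell} (hp1 : p.1 < k) (hq1 : q.1 < k)
    (hp2 : p.2 < m) (hq2 : q.2 < m) (h : readBefore p q) :
    keyN k m p < keyN k m q := by
  unfold keyN
  rcases h with h | ⟨h1, h2⟩
  · have h3 : k - 1 - p.1 + 1 ≤ k - 1 - q.1 := by omega
    calc (k - 1 - p.1) * m + p.2 < (k - 1 - p.1) * m + m := by omega
      _ = (k - 1 - p.1 + 1) * m := by ring
      _ ≤ (k - 1 - q.1) * m := Nat.mul_le_mul_right m h3
      _ ≤ (k - 1 - q.1) * m + q.2 := Nat.le_add_right _ _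
  · rw [h1]; omega

lemma keyN_lt_top {k m : ℕ} {q : Cell} (hq1 : q.1 < k) (hq2 : q.2 < m) :
    keyN k m q < k * m := by
  unfold keyN
  have h3 : k - 1 - q.1 + 1 ≤ k := by omega
  calc (k - 1 - q.1) * m + q.2 < (k - 1 - q.1) * m + m := by omega
    _ = (k - 1 - q.1 + 1) * m := by ring
    _ ≤ k * m := Nat.mul_le_mul_right m h3

lemma inv3_swap {k m : ℕ} {z : PState} {q : Cell} {v : ℕ} (h : Inv3 k m z)
    (hq1 : q.1 < k) (hq2 : q.2 < m) : Inv3 k m (swapState z q v) := by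
  obtain ⟨hb1, hb2, hT⟩ := h
  refine ⟨hq1, hq2, ?_⟩
  intro p w hp
  have hp' : (if p = z.box then some v else if p = q then none else z.T p) = some w := by
    simpa [swapState, Function.update_apply] using hp
  split_ifs at hp' with h1 h2
  · exact h1 ▸ ⟨hb1, hb2⟩
  · exact hT p w hp'

lemma inv3_step {k m lb : ℕ} {s t : ℕ × Bool × PState} (h : Step k m lb s t)
    (hi : Inv3 k m s.2.2) : Inv3 k m t.2.2 := by
  cases h with
  | p1 _ h => exact inv3_swap hi (hi.2.2 _ _ h.1).1 (hi.2.2 _ _ h.1).2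
  | p1to2 _ _ => exact hi
  | p2 _ _ h => exact inv3_swap hi (hi.2.2 _ _ h.1).1 (hi.2.2 _ _ h.1).2
  | p2inc _ _ => exact hi

lemma inv3_run {k m lb : ℕ} {s t : ℕ × Bool × PState}
    (h : Relation.ReflTransGen (Step k m lb) s t) (hs : Inv3 k m s.2.2) :
    Inv3 k m t.2.2 := by
  induction h with
  | refl => exact hs
  | tail _ hstep ih => exact inv3_step hstep ih

lemma exists_p2 {k m i : ℕ} {z : PState} (hinv : Inv3 k m z)
    (hc : phase2Cond k m i z) :
    (∃ q, z.T q = some i ∧ readBefore z.box q) ∧ ∃ q, Phase2Move i z q := by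
  classical
  have hpos : 0 < countP k m z.T (fun q => readBefore z.box q) i :=
    lt_of_le_of_lt (Nat.zero_le _) hc
  unfold countP at hpos
  obtain ⟨p, hp⟩ := Finset.card_pos.mp hpos
  rw [Finset.mem_filter] at hp
  set s : Finset Cell := (Finset.range k ×ˢ Finset.range m).filter
      (fun q => z.T q = some i ∧ readBefore z.box q) with hs
  have hmem : ∀ q : Cell, z.T q = some i → readBefore z.box q → q ∈ s := by
    intro q h1 h2
    have hb := hinv.2.2 q i h1
    simp only [hs, Finset.mem_filter, Finset.mem_product, Finset.mem_range]
    exact ⟨⟨hb.1, hb.2⟩, h1, h2⟩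
  have hps : p ∈ s := hmem p hp.2.2 hp.2.1
  obtain ⟨q, hq, hmin⟩ := Finset.exists_min_image s (keyN k m) ⟨p, hps⟩
  rw [hs, Finset.mem_filter] at hq
  refine ⟨⟨p, hp.2.2, hp.2.1⟩, q, hq.2.1, hq.2.2, ?_⟩
  intro q' h1 h2
  rcases eq_or_ne q' q with rfl | hne
  · exact Or.inl rfl
  · rcases readBefore_trichotomy hne.symm with h | h
    · exact Or.inr h
    · exfalso
      have hle := hmin q' (hmem q' h1 h2)
      have hb := hinv.2.2 q' i h1
      have hqb := hinv.2.2 q i hq.2.1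
      have := keyN_lt hb.1 hqb.1 hb.2 hqb.2 h
      omega

lemma exists_p1 {k m i : ℕ} {z : PState} (hinv : Inv3 k m z)
    (hc : phase1Cond i z) : ∃ q, Phase1Move i z q := by
  classical
  obtain ⟨p, hp1, hp2⟩ := hc
  set s : Finset Cell := (Finset.range k ×ˢ Finset.range m).filter
      (fun q => z.T q = some i ∧ readBefore q z.box) with hs
  have hmem : ∀ q : Cell, z.T q = some i → readBefore q z.box → q ∈ s := by
    intro q h1 h2
    have hb := hinv.2.2 q i h1
    simp only [hs, Finset.mem_filter, Finset.mem_product, Finset.mem_range]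
    exact ⟨⟨hb.1, hb.2⟩, h1, h2⟩
  obtain ⟨q, hq, hmax⟩ := Finset.exists_max_image s (keyN k m) ⟨p, hmem p hp1 hp2⟩
  rw [hs, Finset.mem_filter] at hq
  refine ⟨q, hq.2.1, hq.2.2, ?_⟩
  intro q' h1 h2
  rcases eq_or_ne q' q with rfl | hne
  · exact Or.inl rfl
  · rcases readBefore_trichotomy hne with h | h
    · exact Or.inr h
    · exfalso
      have hle := hmax q' (hmem q' h1 h2)
      have hb := hinv.2.2 q' i h1
      have hqb := hinv.2.2 q i hq.2.1
      have := keyN_lt hqb.1 hb.1 hqb.2 hb.2 h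
      omega

/-- Termination measure for the local evacuation-shuffle. -/
def meas3 (k m lb : ℕ) (s : ℕ × Bool × PState) : ℕ :=
  (lb + 1 - s.1) * (k * m + 2) + (if s.2.1 then 0 else 1) +
    (k * m - keyN k m s.2.2.box)

lemma meas3_succ {k m lb i : ℕ} (hi : i ≤ lb) (b0 b1 : Bool) (z0 z1 : PState) :
    meas3 k m lb (i + 1, b1, z1) < meas3 k m lb (i, b0, z0) := by
  show (lb + 1 - (i + 1)) * (k * m + 2) + (if b1 then 0 else 1) +
      (k * m - keyN k m z1.box)
    < (lb + 1 - i) * (k * m + 2) + (if b0 then 0 else 1) +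
      (k * m - keyN k m z0.box)
  have h3 : (lb + 1 - i) * (k * m + 2)
      = (lb + 1 - (i + 1)) * (k * m + 2) + (k * m + 2) := by
    have h : lb + 1 - i = (lb + 1 - (i + 1)) + 1 := by omega
    rw [h, add_mul, one_mul]
  rw [h3]
  have h4 : (if b1 then (0:ℕ) else 1) ≤ 1 := by split <;> omega
  have h2 : k * m - keyN k m z1.box ≤ k * m := Nat.sub_le _ _
  calc (lb + 1 - (i + 1)) * (k * m + 2) + (if b1 then 0 else 1) +
        (k * m - keyN k m z1.box)
      ≤ (lb + 1 - (i + 1)) * (k * m + 2) + 1 + (k * m) := by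
        exact Nat.add_le_add (Nat.add_le_add_left h4 _) h2
    _ < (lb + 1 - (i + 1)) * (k * m + 2) + (k * m + 2) := by omega
    _ ≤ (lb + 1 - (i + 1)) * (k * m + 2) + (k * m + 2) +
        ((if b0 then 0 else 1) + (k * m - keyN k m z0.box)) := Nat.le_add_right _ _
    _ = (lb + 1 - (i + 1)) * (k * m + 2) + (k * m + 2) + (if b0 then 0 else 1) +
        (k * m - keyN k m z0.box) := by ring

lemma meas3_p1to2 {k m lb i : ℕ} (z : PState) :
    meas3 k m lb (i, true, z) < meas3 k m lb (i, false, z) := by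
  show (lb + 1 - i) * (k * m + 2) + 0 + (k * m - keyN k m z.box)
    < (lb + 1 - i) * (k * m + 2) + 1 + (k * m - keyN k m z.box)
  exact Nat.add_lt_add_right (Nat.add_lt_add_left Nat.zero_lt_one _) _

lemma meas3_p2 {k m lb i v : ℕ} {z : PState} {q : Cell}
    (h1 : keyN k m z.box < keyN k m q) (h2 : keyN k m q < k * m) :
    meas3 k m lb (i, true, swapState z q v) < meas3 k m lb (i, true, z) := by
  show (lb + 1 - i) * (k * m + 2) + 0 + (k * m - keyN k m q)
    < (lb + 1 - i) * (k * m + 2) + 0 + (k * m - keyN k m z.box)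
  have : k * m - keyN k m q < k * m - keyN k m z.box := by omega
  exact Nat.add_lt_add_left this _

lemma terminates3 {k m lb : ℕ} :
    ∀ N (i : ℕ) (ph : Bool) (z : PState), meas3 k m lb (i, ph, z) < N →
    Inv3 k m z → i ≤ lb + 1 →
    ∃ bl y, Relation.ReflTransGen (Step k m lb) (i, ph, z) (lb + 1, bl, y) := by
  intro N
  induction N with
  | zero => intro i ph z h; exact absurd h (Nat.not_lt_zero _)
  | succ N ih =>
    intro i ph z hN hinv hile
    rcases eq_or_lt_of_le hile with heq | hlt
    · subst heq; exact ⟨ph, z, Relation.ReflTransGen.refl⟩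
    · have hi : i ≤ lb := by omega
      have hN' : meas3 k m lb (i, ph, z) ≤ N := Nat.lt_succ_iff.mp hN
      cases ph with
      | false =>
        by_cases hc : phase1Cond i z
        · obtain ⟨q, hq⟩ := exists_p1 hinv hc
          have hq' := hinv.2.2 q i hq.1
          obtain ⟨bl, y, hr⟩ := ih (i + 1) false (swapState z q i)
            (lt_of_lt_of_le (meas3_succ hi false false z (swapState z q i)) hN')
            (inv3_swap hinv hq'.1 hq'.2) (by omega)
          exact ⟨bl, y, Relation.ReflTransGen.head (Step.p1 hi hq) hr⟩
        · obtain ⟨bl, y, hr⟩ := ih i true z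
            (lt_of_lt_of_le (meas3_p1to2 z) hN') hinv (by omega)
          exact ⟨bl, y, Relation.ReflTransGen.head (Step.p1to2 hi hc) hr⟩
      | true =>
        by_cases hc : phase2Cond k m i z
        · obtain ⟨-, q, hq⟩ := exists_p2 hinv hc
          have hq' := hinv.2.2 q i hq.1
          have hkey : keyN k m z.box < keyN k m q :=
            keyN_lt hinv.1 hq'.1 hinv.2.1 hq'.2 hq.2.1
          obtain ⟨bl, y, hr⟩ := ih i true (swapState z q i)
            (lt_of_lt_of_le (meas3_p2 hkey (keyN_lt_top hq'.1 hq'.2)) hN')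
            (inv3_swap hinv hq'.1 hq'.2) (by omega)
          exact ⟨bl, y, Relation.ReflTransGen.head (Step.p2 hi hc hq) hr⟩
        · obtain ⟨bl, y, hr⟩ := ih (i + 1) true z
            (lt_of_lt_of_le (meas3_succ hi true true z z) hN') hinv (by omega)
          exact ⟨bl, y, Relation.ReflTransGen.head (Step.p2inc hi hc) hr⟩

/-- In Phase 2 with current value `i`, if the suffix strictly
after `⊠` has strictly more `i`'s than `(i+1)`'s, then some entry `i` occurs
after `⊠` in reading order (and hence a nearest such entry exists, so the move
is well defined); moreover the algorithm terminates. -/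
theorem stmt_3 (k m : ℕ) (hk : 0 < k) (hm : 0 < m) (a b g : Partition k m)
    (hsz : a.size + b.size + g.size = k * m - 1)
    (x : PState) (hx : MemLR1 k m a b g x) :
    (∀ (i : ℕ) (z : PState),
      Relation.ReflTransGen (Step k m b.length) (1, false, x) (i, true, z) →
      phase2Cond k m i z →
        (∃ q, z.T q = some i ∧ readBefore z.box q) ∧ ∃ q, Phase2Move i z q) ∧
    ∃ (bl : Bool) (y : PState),
      Relation.ReflTransGen (Step k m b.length) (1, false, x)
        (b.length + 1, bl, y) := by
  have hinv0 : Inv3 k m x := by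
    obtain ⟨hbox, hshape, -⟩ := hx
    have hb1 : x.box.1 < k := hbox.1
    have hb2 : x.box.2 < m := lt_of_lt_of_le hbox.2.2 (Nat.sub_le _ _)
    refine ⟨hb1, hb2, ?_⟩
    intro p v hp
    have hsome : (x.T p).isSome := by rw [hp]; rfl
    have hp2 := (hshape p).mp hsome
    exact ⟨hp2.1.1, lt_of_lt_of_le hp2.1.2.2 (Nat.sub_le _ _)⟩
  constructor
  · intro i z hrun hc
    exact exists_p2 (inv3_run hrun hinv0) hc
  · exact terminates3 (meas3 k m b.length (1, false, x) + 1) 1 false x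
      (Nat.lt_succ_self _) hinv0 (by omega)


end SC
end
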